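/- The function g₀(ζ) := ∫_ζ^1 √(t^{−2} − 1) dt − (1−ζ²)^{3/2}/(2−ζ²) is differentiable on (0,1) with derivative g₀'(ζ) = 2·√(1−ζ²)·( 2 − (2−ζ²)² ) / ( ζ·(2−ζ²)² ) for all ζ ∈ (0,1). -/

import Mathlib

/-- The leading-order criticality function
`g₀(ζ) = ∫_ζ^1 √(t^{−2}−1) dt − (1−ζ²)^{3/2}/(2−ζ²)`. -/
noncomputable def g0 (ζ : ℝ) : ℝ :=
  (∫ t in ζ..(1 : ℝ), Real.sqrt (1 / t ^ 2 - 1)) - (1 - ζ ^ 2) ^ ((3 : ℝ) / 2) / (2 - ζ ^ 2)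

/-- `g₀` is differentiable on `(0,1)` with
`g₀'(ζ) = 2√(1−ζ²)(2−(2−ζ²)²)/(ζ(2−ζ²)²)`. -/
theorem stmt7 :
    ∀ ζ ∈ Set.Ioo (0 : ℝ) 1,
      HasDerivAt g0
        (2 * Real.sqrt (1 - ζ ^ 2) * (2 - (2 - ζ ^ 2) ^ 2) / (ζ * (2 - ζ ^ 2) ^ 2)) ζ := by
  rintro ζ ⟨hζ0, hζ1⟩
  set f : ℝ → ℝ := fun t => Real.sqrt (1 / t ^ 2 - 1) with hf
  have hζne : ζ ≠ 0 := ne_of_gt hζ0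
  have hu_pos : (0:ℝ) < 1 - ζ ^ 2 := by nlinarith
  have hv_pos : (0:ℝ) < 2 - ζ ^ 2 := by nlinarith
  have hvne : (2:ℝ) - ζ ^ 2 ≠ 0 := ne_of_gt hv_pos
  set s := Real.sqrt (1 - ζ ^ 2) with hsdef
  have hs : s ^ 2 = 1 - ζ ^ 2 := Real.sq_sqrt hu_pos.le
  have hs_pos : 0 < s := Real.sqrt_pos.mpr hu_pos
  -- continuity of f at nonzero points
  have hcont : ∀ t : ℝ, t ≠ 0 → ContinuousAt f t := by
    intro t ht
    apply Real.continuous_sqrt.continuousAt.comp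
    exact (continuousAt_const.div (continuousAt_id.pow 2) (pow_ne_zero 2 ht)).sub
      continuousAt_const
  -- integrability
  have hint : IntervalIntegrable f MeasureTheory.volume ζ 1 := by
    apply ContinuousOn.intervalIntegrable
    intro t ht
    rw [Set.uIcc_of_le hζ1.le] at ht
    exact (hcont t (ne_of_gt (lt_of_lt_of_le hζ0 ht.1))).continuousWithinAt
  have hmeas : StronglyMeasurableAtFilter f (nhds ζ) := by
    have : Measurable f := by
      apply Measurable.sqrt
      exact (measurable_const.div ((measurable_id.pow_const 2))).sub measurable_const
    exact this.stronglyMeasurable.stronglyMeasurableAtFilter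
  have h1 : HasDerivAt (fun u => ∫ t in u..(1:ℝ), f t) (-f ζ) ζ :=
    intervalIntegral.integral_hasDerivAt_left hint hmeas (hcont ζ hζne)
  -- derivative of the second term
  have hu : HasDerivAt (fun x : ℝ => 1 - x ^ 2) (-(2 * ζ)) ζ := by
    simpa using ((hasDerivAt_pow 2 ζ).const_sub 1)
  have hv : HasDerivAt (fun x : ℝ => 2 - x ^ 2) (-(2 * ζ)) ζ := by
    simpa using ((hasDerivAt_pow 2 ζ).const_sub 2)
  have hrpow : HasDerivAt (fun x : ℝ => (1 - x ^ 2) ^ ((3:ℝ)/2))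
      (((3:ℝ)/2 * (1 - ζ ^ 2) ^ ((3:ℝ)/2 - 1)) * (-(2 * ζ))) ζ := by
    exact (Real.hasDerivAt_rpow_const (Or.inr (by norm_num))).comp ζ hu
  have h2 : HasDerivAt (fun x : ℝ => (1 - x ^ 2) ^ ((3:ℝ)/2) / (2 - x ^ 2))
      (((((3:ℝ)/2 * (1 - ζ ^ 2) ^ ((3:ℝ)/2 - 1)) * (-(2 * ζ))) * (2 - ζ ^ 2)
        - (1 - ζ ^ 2) ^ ((3:ℝ)/2) * (-(2 * ζ))) / (2 - ζ ^ 2) ^ 2) ζ :=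
    hrpow.div hv hvne
  have hg : HasDerivAt g0
      ((-f ζ) - ((((3:ℝ)/2 * (1 - ζ ^ 2) ^ ((3:ℝ)/2 - 1)) * (-(2 * ζ))) * (2 - ζ ^ 2)
        - (1 - ζ ^ 2) ^ ((3:ℝ)/2) * (-(2 * ζ))) / (2 - ζ ^ 2) ^ 2) ζ := h1.sub h2
  convert hg using 1
  -- rewrite rpow terms via s
  have hhalf : (1 - ζ ^ 2) ^ ((1:ℝ)/2) = s := by
    rw [hsdef, Real.sqrt_eq_rpow]
  have e1 : (1 - ζ ^ 2) ^ ((3:ℝ)/2 - 1) = s := by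
    norm_num
    exact hhalf
  have e2 : (1 - ζ ^ 2) ^ ((3:ℝ)/2) = (1 - ζ ^ 2) * s := by
    have : ((3:ℝ)/2) = 1 + 1/2 := by norm_num
    rw [this, Real.rpow_add hu_pos, Real.rpow_one, hhalf]
  have e3 : f ζ = s / ζ := by
    have : 1 / ζ ^ 2 - 1 = (1 - ζ ^ 2) / ζ ^ 2 := by
      field_simp
    rw [hf]
    simp only [this]
    rw [Real.sqrt_div hu_pos.le, Real.sqrt_sq hζ0.le]
  rw [e1, e2, e3]
  rw [← hs]
  field_simp
  linear_combination (2 * ζ ^ 2) * hs
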